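/- Let λ_o ∈ (0, 1/2), μ_o = 1 - λ_o, λ_i ∈ [λ_o, 1], μ_i = 1 - λ_i, γ ∈ (0, 1), 0 < C_i ≤ C_c, and φ = (1 - √(1 - 4λ_o μ_o γ²)) / (2λ_o γ). Suppose (a) γ(λ_i - λ_o)(1 - φ²) > C_i / C_c and (b) γμ_o(1 + γμ_o) ≤ 1 - γ²λ_o μ_o. Let V : ℕ → ℝ be bounded, nonnegative, with V(0) = C_c and V(h) = min( γ(λ_o V(h+1) + μ_o V(h-1)), C_i + γ(λ_i V(h+1) + μ_i V(h-1)) ) for all h ≥ 1. Then there exists a threshold h̄ ≥ 1 such that for every h with 1 ≤ h ≤ h̄, C_i + γ(λ_i V(h+1) + μ_i V(h-1)) ≤ γ(λ_o V(h+1) + μ_o V(h-1)), and for every h > h̄, γ(λ_o V(h+1) + μ_o V(h-1)) < C_i + γ(λ_i V(h+1) + μ_i V(h-1)). -/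

import Mathlib

set_option maxHeartbeats 800000

/-- Theorem 2: Under conditions (a) and (b), the optimal policy
for the simplified RPM service is a threshold policy: intensive monitoring is
(weakly) preferred at all health states `1 ≤ h ≤ h̄` and ordinary monitoring is
strictly preferred at all health states `h > h̄`. -/
theorem stmt_17 (lo mo li mi gam Ci Cc phi : ℝ)
    (hlo0 : 0 < lo) (hlo : lo < 1/2) (hmo : mo = 1 - lo)
    (hli : li ∈ Set.Icc lo 1) (hmi : mi = 1 - li)
    (hgam0 : 0 < gam) (hgam1 : gam < 1)
    (hCi0 : 0 < Ci) (hCiCc : Ci ≤ Cc)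
    (hphi : phi = (1 - Real.sqrt (1 - 4*lo*mo*gam^2)) / (2*lo*gam))
    (hconda : Ci / Cc < gam * (li - lo) * (1 - phi ^ 2))
    (hcondb : gam * mo * (1 + gam * mo) ≤ 1 - gam^2 * lo * mo)
    (V : ℕ → ℝ) (hbdd : ∃ M : ℝ, ∀ h : ℕ, |V h| ≤ M)
    (hpos : ∀ h : ℕ, 0 ≤ V h)
    (hV0 : V 0 = Cc)
    (hbell : ∀ h : ℕ, 1 ≤ h →
      V h = min (gam * (lo * V (h+1) + mo * V (h-1)))
                (Ci + gam * (li * V (h+1) + mi * V (h-1)))) :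
    ∃ hbar : ℕ, 1 ≤ hbar ∧
      (∀ h : ℕ, 1 ≤ h → h ≤ hbar →
        Ci + gam * (li * V (h+1) + mi * V (h-1))
          ≤ gam * (lo * V (h+1) + mo * V (h-1))) ∧
      (∀ h : ℕ, hbar < h →
        gam * (lo * V (h+1) + mo * V (h-1))
          < Ci + gam * (li * V (h+1) + mi * V (h-1))) := by
  classical
  obtain ⟨hlio, hli1⟩ := hli
  subst hmo hmi
  have hmo0 : 0 < 1 - lo := by linarith
  have hCc : 0 < Cc := lt_of_lt_of_le hCi0 hCiCc
  have hg2 : gam ^ 2 < 1 := by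
    have := mul_lt_mul_of_pos_right hgam1 hgam0
    nlinarith
  have hc4 : 0 < 4*lo*(1-lo)*gam^2 :=
    mul_pos (mul_pos (by linarith : (0:ℝ) < 4*lo) hmo0) (pow_pos hgam0 2)
  have hdisc : 0 < 1 - 4*lo*(1-lo)*gam^2 := by
    linarith only [sq_nonneg ((1 - 2*lo) * gam), hg2]
  set r := Real.sqrt (1 - 4*lo*(1-lo)*gam^2) with hrdef
  have hr0 : 0 ≤ r := Real.sqrt_nonneg _
  have hr2 : r ^ 2 = 1 - 4*lo*(1-lo)*gam^2 := Real.sq_sqrt hdisc.le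
  have hr1 : r < 1 := by
    rw [hrdef]
    exact (Real.sqrt_lt' one_pos).mpr (by linarith only [hc4])
  have h2lg : (0:ℝ) < 2 * lo * gam := by positivity
  have hphipos : 0 < phi := by
    rw [hphi]; exact div_pos (by linarith) h2lg
  have hphilt1 : phi < 1 := by
    have h1 : 0 < 1 - 2*lo*gam := by
      linarith only [mul_pos hlo0 (sub_pos.mpr hgam1), hlo]
    have hkey : 1 - 2*lo*gam < r := by
      by_contra hc'
      push_neg at hc'
      have hsq := mul_self_le_mul_self hr0 hc'
      have hg1lo := mul_pos (mul_pos hlo0 hgam0) (sub_pos.mpr hgam1)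
      nlinarith [hsq, hr2, hg1lo]
    rw [hphi, div_lt_one h2lg]; linarith
  have hphisq : phi ^ 2 < 1 := by nlinarith [hphipos, hphilt1]
  -- quadratic identity for phi
  have e : r = 1 - 2*lo*gam*phi := by
    rw [hphi]; field_simp; ring
  have e2 : (1 - 2*lo*gam*phi)^2 = 1 - 4*lo*(1-lo)*gam^2 := by rw [← e]; exact hr2
  have hquad : phi = gam * (lo * phi^2 + (1-lo)) := by
    have key : 4*lo*gam*(phi - gam*(lo*phi^2 + (1-lo))) = 0 := by linear_combination -e2
    have h4 : (4:ℝ)*lo*gam ≠ 0 := by positivity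
    rcases mul_eq_zero.mp key with h | h
    · exact absurd h h4
    · linarith
  -- V h ≤ phi^h * Cc
  have hVle : ∀ h, V h ≤ phi ^ h * Cc := by
    by_contra hcon
    push_neg at hcon
    obtain ⟨h0, hh0⟩ := hcon
    obtain ⟨M, hM⟩ := hbdd
    have hbddE : BddAbove (Set.range (fun h => V h - phi ^ h * Cc)) := by
      refine ⟨M, ?_⟩
      rintro x ⟨h, rfl⟩
      have h1 := (abs_le.mp (hM h)).2
      have h2 : 0 ≤ phi ^ h * Cc := mul_nonneg (pow_nonneg hphipos.le h) hCc.le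
      dsimp only
      linarith only [h1, h2]
    set s := sSup (Set.range (fun h => V h - phi ^ h * Cc)) with hs
    have hsE : ∀ h, V h - phi ^ h * Cc ≤ s := fun h => le_csSup hbddE ⟨h, rfl⟩
    have hspos : 0 < s := lt_of_lt_of_le (sub_pos.mpr hh0) (hsE h0)
    have hkey : ∀ h, V h - phi ^ h * Cc ≤ gam * s := by
      intro h
      match h with
      | 0 =>
        rw [hV0]
        simp only [pow_zero, one_mul]
        have hx : (0:ℝ) ≤ gam * s := mul_nonneg hgam0.le hspos.le
        linarith only [hx]
      | (k+1) =>
        have hV1 : V (k+1) ≤ gam * (lo * V (k+2) + (1-lo) * V k) :=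
          le_of_eq_of_le (hbell (k+1) (by omega)) (min_le_left _ _)
        have hW : phi ^ (k+1) * Cc = gam*(lo*(phi^(k+2)*Cc) + (1-lo)*(phi^k*Cc)) := by
          have hp : phi ^ (k+1) = phi ^ k * phi := by ring
          calc phi ^ (k+1) * Cc = phi ^ k * phi * Cc := by rw [hp]
            _ = phi ^ k * (gam * (lo * phi^2 + (1-lo))) * Cc := by rw [← hquad]
            _ = gam*(lo*(phi^(k+2)*Cc) + (1-lo)*(phi^k*Cc)) := by ring
        have m1 := mul_le_mul_of_nonneg_left (hsE (k+2)) (mul_nonneg hgam0.le hlo0.le)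
        have m2 := mul_le_mul_of_nonneg_left (hsE k) (mul_nonneg hgam0.le hmo0.le)
        linarith only [hV1, hW, m1, m2]
    have hle : s ≤ gam * s :=
      Real.sSup_le (by rintro x ⟨h, rfl⟩; exact hkey h) (mul_nonneg hgam0.le hspos.le)
    have := mul_lt_mul_of_pos_right hgam1 hspos
    linarith only [hle, this]
  -- delta positive
  have hδ : 0 < li - lo := by
    rcases lt_or_ge lo li with h | h
    · linarith
    · exfalso
      have h1 : 0 < Ci / Cc := div_pos hCi0 hCc
      have h4 := mul_nonneg (mul_nonneg hgam0.le (sub_nonneg.mpr h))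
        (by linarith only [hphisq] : (0:ℝ) ≤ 1 - phi^2)
      linarith only [hconda, h1, h4]
  have hgd : 0 < gam * (li - lo) := mul_pos hgam0 hδ
  -- base: intensive strictly preferred at state 1
  have hV2 : V 2 ≤ phi ^ 2 * Cc := hVle 2
  have hP1 : Ci < gam * (li - lo) * (V 0 - V 2) := by
    rw [hV0]
    have h1 : Ci < gam * (li - lo) * (1 - phi^2) * Cc := (div_lt_iff₀ hCc).mp hconda
    have hc2 : (1 - phi^2) * Cc ≤ Cc - V 2 := by linarith only [hV2]
    have hm := mul_le_mul_of_nonneg_left hc2 hgd.le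
    linarith only [h1, hm]
  -- condition (b) rearranged
  have hb2 : gam * (1-lo) ≤ 1 - gam^2 * (1-lo) := by linarith only [hcondb]
  have hk : 0 < 1 - gam^2 * (1-lo) := by
    linarith only [hb2, mul_pos hgam0 hmo0]
  -- upward propagation of ordinary monitoring
  have hup : ∀ j : ℕ, gam*(li-lo)*(V j - V (j+2)) < Ci →
      gam*(li-lo)*(V (j+1) - V (j+3)) < Ci := by
    intro j hj
    have hab : gam * (lo * V (j+2) + (1-lo) * V j)
        < Ci + gam * (li * V (j+2) + (1-li) * V j) := by linarith only [hj]
    have hVa : V (j+1) = gam * (lo * V (j+2) + (1-lo) * V j) := by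
      rw [hbell (j+1) (by omega)]
      exact min_eq_left hab.le
    have hV1 : V (j+2) ≤ gam * (lo * V (j+3) + (1-lo) * V (j+1)) :=
      le_of_eq_of_le (hbell (j+2) (by omega)) (min_le_left _ _)
    have s1 : V (j+1) = gam * V (j+2) + gam*(1-lo)*(V j - V (j+2)) := by
      rw [hVa]; ring
    have s2 : gam * V (j+2) ≤ gam^2*lo*V (j+3) + gam^2*(1-lo)*V (j+1) := by
      have hm := mul_le_mul_of_nonneg_left hV1 hgam0.le
      linarith only [hm]
    have hbnd : (1 - gam^2*(1-lo))*(V (j+1) - V (j+3)) ≤ gam*(1-lo)*(V j - V (j+2)) := by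
      have hx := mul_nonneg (by linarith only [hg2] : (0:ℝ) ≤ 1 - gam^2) (hpos (j+3))
      linarith only [s1, s2, hx]
    have t1 : gam*(li-lo)*((1 - gam^2*(1-lo))*(V (j+1) - V (j+3)))
        ≤ gam*(li-lo)*(gam*(1-lo)*(V j - V (j+2))) :=
      mul_le_mul_of_nonneg_left hbnd hgd.le
    rcases le_or_gt 0 (V j - V (j+2)) with hB | hB
    · have t2' := mul_le_mul_of_nonneg_left (mul_le_mul_of_nonneg_right hb2 hB) hgd.le
      have t3 := mul_lt_mul_of_pos_left hj hk
      have t5 : (1 - gam^2*(1-lo)) * (gam*(li-lo)*(V (j+1) - V (j+3)))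
          < (1 - gam^2*(1-lo)) * Ci := by linarith only [t1, t2', t3]
      exact (mul_lt_mul_iff_right₀ hk).mp t5
    · have t4 : gam*(li-lo)*(gam*(1-lo)*(V j - V (j+2))) ≤ 0 := by
        have hx := mul_nonneg (mul_pos hgd (mul_pos hgam0 hmo0)).le
          (neg_nonneg.mpr hB.le)
        linarith only [hx]
      have t5 : (1 - gam^2*(1-lo)) * (gam*(li-lo)*(V (j+1) - V (j+3)))
          < (1 - gam^2*(1-lo)) * Ci := by
        linarith only [t1, t4, mul_pos hk hCi0]
      exact (mul_lt_mul_iff_right₀ hk).mp t5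
  -- not all states can prefer intensive monitoring
  have hex : ∃ j : ℕ, gam*(li-lo)*(V j - V (j+2)) < Ci := by
    by_contra hc
    push_neg at hc
    have key : ∀ k : ℕ, (k:ℝ) * Ci ≤ gam*(li-lo)*(V 0 - V (2*k)) := by
      intro k
      induction k with
      | zero => simp
      | succ n ih =>
        have h1 := hc (2*n)
        have e : 2*(n+1) = 2*n+2 := by ring
        rw [e]
        push_cast
        linarith only [ih, h1]
    obtain ⟨k, hk'⟩ := exists_nat_gt (gam*(li-lo)*(V 0) / Ci)
    have h1 := key k
    have h2 : gam*(li-lo)*(V 0) < (k:ℝ) * Ci := by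
      rw [div_lt_iff₀ hCi0] at hk'
      linarith only [hk']
    have hx := mul_nonneg hgd.le (hpos (2*k))
    linarith only [h1, h2, hx]
  set N := Nat.find hex with hNdef
  have hQN : gam*(li-lo)*(V N - V (N+2)) < Ci := Nat.find_spec hex
  have hmin : ∀ m, m < N → ¬ (gam*(li-lo)*(V m - V (m+2)) < Ci) :=
    fun m hm => Nat.find_min hex hm
  have hN1 : 1 ≤ N := by
    rcases Nat.eq_zero_or_pos N with h0 | h1
    · exfalso
      rw [h0] at hQN
      norm_num at hQN
      linarith only [hP1, hQN]
    · exact h1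
  have hQall : ∀ m, N ≤ m → gam*(li-lo)*(V m - V (m+2)) < Ci := by
    intro m hm
    induction m, hm using Nat.le_induction with
    | base => exact hQN
    | succ n hn ih => exact hup n ih
  refine ⟨N, hN1, ?_, ?_⟩
  · intro h h1 h2
    obtain ⟨m, rfl⟩ : ∃ m, h = m + 1 := ⟨h - 1, by omega⟩
    have hnot := hmin m (by omega)
    push_neg at hnot
    have e1 : m + 1 + 1 = m + 2 := by omega
    have e2 : m + 1 - 1 = m := by omega
    rw [e1, e2]
    linarith only [hnot]
  · intro h h1
    obtain ⟨m, rfl⟩ : ∃ m, h = m + 1 := ⟨h - 1, by omega⟩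
    have hq := hQall m (by omega)
    have e1 : m + 1 + 1 = m + 2 := by omega
    have e2 : m + 1 - 1 = m := by omega
    rw [e1, e2]
    linarith only [hq]
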